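/- Let k ≥ 2, n ≥ 1, n_k ≥ 1 be integers and n₁,…,n_{k−1} nonnegative integers. Let f be a non-constant polynomial over ℂ whose zeros all have multiplicity at least k. Then for any nonzero c ∈ ℂ, the polynomial f^n·(f')^{n₁}·…·(f^{(k)})^{n_k} − c has at least two distinct zeros. -/

import Mathlib

open Polynomial

lemma iter_deriv_facts (f : ℂ[X]) (hf0 : f ≠ 0) :
    ∀ j ≤ f.natDegree, derivative^[j] f ≠ 0 ∧
      (derivative^[j] f).natDegree = f.natDegree - j := by
  intro j
  induction j with
  | zero => intro _; simpa using hf0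
  | succ j ih =>
    intro hj
    obtain ⟨hne, hdeg⟩ := ih (by omega)
    have hpos : 0 < (derivative^[j] f).natDegree := by omega
    have hdeq := degree_derivative_eq _ hpos
    rw [Function.iterate_succ_apply']
    constructor
    · intro h
      rw [h, degree_zero] at hdeq
      exact (WithBot.bot_ne_coe) hdeq
    · have := natDegree_eq_of_degree_eq_some hdeq
      omega

theorem stmt2 (n k : ℕ) (hn : 1 ≤ n) (hk : 2 ≤ k) (ν : ℕ → ℕ) (hνk : 1 ≤ ν k)
    (f : ℂ[X]) (hf : 1 ≤ f.natDegree)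
    (hmult : ∀ z : ℂ, f.IsRoot z → k ≤ f.rootMultiplicity z)
    (c : ℂ) (hc : c ≠ 0) :
    ∃ z₁ z₂ : ℂ, z₁ ≠ z₂ ∧
      (f ^ n * ∏ j ∈ Finset.Icc 1 k, (derivative^[j] f) ^ (ν j) - C c).IsRoot z₁ ∧
      (f ^ n * ∏ j ∈ Finset.Icc 1 k, (derivative^[j] f) ^ (ν j) - C c).IsRoot z₂ := by
  classical
  set F : ℂ[X] := f ^ n * ∏ j ∈ Finset.Icc 1 k, (derivative^[j] f) ^ (ν j) with hF
  set G : ℂ[X] := F - C c with hG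
  have hf0 : f ≠ 0 := fun h => by simp [h] at hf
  -- f has a root z, of multiplicity ≥ k, so natDegree f ≥ k
  obtain ⟨z, hz⟩ := Complex.exists_root (f := f) (by rwa [← natDegree_pos_iff_degree_pos])
  have hkz : k ≤ f.rootMultiplicity z := hmult z hz
  have hdk : k ≤ f.natDegree := by
    refine le_trans hkz ?_
    have := natDegree_le_of_dvd (pow_rootMultiplicity_dvd f z) hf0
    simpa [natDegree_pow] using this
  -- F ≠ 0
  have hFne : F ≠ 0 := by
    refine mul_ne_zero (pow_ne_zero _ hf0) (Finset.prod_ne_zero_iff.2 ?_)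
    intro j hj
    exact pow_ne_zero _ ((iter_deriv_facts f hf0 j (le_trans (Finset.mem_Icc.1 hj).2 hdk)).1)
  -- natDegree F ≥ 1
  have hFdvd : f ^ n ∣ F := Dvd.intro _ rfl
  have hFdeg : 1 ≤ F.natDegree := by
    have := natDegree_le_of_dvd hFdvd hFne
    rw [natDegree_pow] at this
    nlinarith
  -- F' ≠ 0
  have hF'ne : derivative F ≠ 0 := by
    intro h
    have := natDegree_eq_zero_of_derivative_eq_zero h
    omega
  have hGne : G ≠ 0 := by
    intro h
    have : G.natDegree = 0 := by rw [h]; simp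
    rw [hG, natDegree_sub_C] at this
    omega
  have hGdeg : G.natDegree = F.natDegree := by rw [hG, natDegree_sub_C]
  by_contra hcon
  push_neg at hcon
  -- G has a root z₀, and it's the only one
  obtain ⟨z₀, hz₀⟩ := Complex.exists_root (f := G)
    (by rw [← natDegree_pos_iff_degree_pos]; omega)
  have honly : ∀ w : ℂ, G.IsRoot w → w = z₀ := by
    intro w hw
    by_contra hne
    exact hcon z₀ w (fun h => hne h.symm) hz₀ hw
  -- rootMultiplicity z₀ G = natDegree G
  set m : ℕ := G.natDegree with hm
  have hcount : G.roots.count z₀ = G.roots.card := by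
    rw [Multiset.count_eq_card]
    intro b hb
    exact (honly b ((mem_roots hGne).1 hb)).symm
  have hcard : G.roots.card = m := (splits_iff_card_roots).1 (IsAlgClosed.splits G)
  have hrmG : G.rootMultiplicity z₀ = m := by
    rw [← count_roots, hcount, hcard]
  -- derivative facts
  have hG' : derivative G = derivative F := by rw [hG]; simp
  have hrmG' : (derivative F).rootMultiplicity z₀ = m - 1 := by
    rw [← hG', derivative_rootMultiplicity_of_root hz₀, hrmG]
  -- z is a root of F with multiplicity ≥ 2, hence a root of F'
  have hzF : (X - C z) ^ 2 ∣ F := by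
    have h1 : (X - C z) ^ 2 ∣ f := dvd_trans (pow_dvd_pow _ (le_trans hk hkz))
      (pow_rootMultiplicity_dvd f z)
    exact dvd_trans (dvd_trans h1 (dvd_pow_self f (by omega))) hFdvd
  have hrmzF : 2 ≤ F.rootMultiplicity z := (le_rootMultiplicity_iff hFne).2 hzF
  have hzrootF : F.IsRoot z := (rootMultiplicity_pos hFne).1 (by omega)
  have hrmzF' : 1 ≤ (derivative F).rootMultiplicity z := by
    rw [derivative_rootMultiplicity_of_root hzrootF]; omega
  have hzrootF' : (derivative F).IsRoot z := (rootMultiplicity_pos hF'ne).1 (by omega)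
  -- z ≠ z₀
  have hzz₀ : z ≠ z₀ := by
    intro h
    have h1 : G.eval z = -c := by
      rw [hG, hF]
      simp [eval_pow, hz.eq_zero, zero_pow (by omega : n ≠ 0)]
    rw [h] at h1
    rw [IsRoot, h1] at hz₀
    exact hc (by linear_combination -hz₀)
  -- F' = (X - z₀)^(m-1) * q with q constant
  obtain ⟨q, hq⟩ := pow_rootMultiplicity_dvd (derivative F) z₀
  rw [hrmG'] at hq
  have hqne : q ≠ 0 := by rintro rfl; simp at hq; omega
  have hqdeg : q.natDegree = 0 := by
    have h1 := natDegree_derivative_le F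
    have h2 : (derivative F).natDegree = (m - 1) + q.natDegree := by
      rw [hq, natDegree_mul (pow_ne_zero _ (X_sub_C_ne_zero z₀)) hqne, natDegree_pow,
        natDegree_X_sub_C, mul_one]
    omega
  have hqeval : q.eval z = 0 := by
    have := hzrootF'
    rw [IsRoot, hq, eval_mul, eval_pow, eval_sub, eval_X, eval_C] at this
    exact (mul_eq_zero.1 this).resolve_left (pow_ne_zero _ (sub_ne_zero_of_ne hzz₀))
  have : q = 0 := by
    rw [eq_C_of_natDegree_eq_zero hqdeg] at hqeval ⊢
    rw [eval_C] at hqeval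
    rw [hqeval, map_zero]
  exact hqne this
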